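/- Assume the line condition r₁·d − d₁·r = g (with r = r₁ + r₂, d = d₁ + d₂, g = gcd(r, d); note g divides r). Let r₂′, d₂′ be integers with 0 < r₂′ ≤ r₂ and m := r₂′·d₂ − r₂·d₂′ ≥ 1. Then r₂ divides the integer r₂′ − (r/g)·m, and r₂′ − (r/g)·m ≤ 0. -/

import Mathlib

/-- The divisibility trick in Lemma 2.2: for a proper subsheaf V₂′ ⊂ V₂ of
rank r₂′ and degree d₂′ with m = r₂′·d₂ − r₂·d₂′ ≥ 1, the integer
r₂′ − (r/g)·m is divisible by r₂ and is ≤ 0. -/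
theorem divisibility_trick (r₁ r₂ d₁ d₂ r d g : ℤ)
    (hr₁ : 0 < r₁) (hr₂ : 0 < r₂)
    (hr : r = r₁ + r₂) (hd : d = d₁ + d₂)
    (hg : g = Int.gcd r d)
    (hline : r₁ * d - d₁ * r = g)
    (r₂' d₂' m : ℤ) (hr₂'pos : 0 < r₂') (hr₂'le : r₂' ≤ r₂)
    (hm : m = r₂' * d₂ - r₂ * d₂') (hm1 : 1 ≤ m) :
    r₂ ∣ (r₂' - (r / g) * m) ∧ r₂' - (r / g) * m ≤ 0 := by
  have hrpos : 0 < r := by omega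
  have hgpos : 0 < g := by
    rw [hg]
    exact_mod_cast Int.gcd_pos_of_ne_zero_left d (by omega)
  have hgr : g ∣ r := hg ▸ Int.gcd_dvd_left r d
  have hgd : g ∣ d := hg ▸ Int.gcd_dvd_right r d
  set r' := r / g with hr'
  set d' := d / g with hd'
  have hgr' : g * r' = r := Int.mul_ediv_cancel' hgr
  have hgd' : g * d' = d := Int.mul_ediv_cancel' hgd
  have hr'pos : 0 < r' := by
    rcases hgr with ⟨k, hk⟩
    have : 0 < k := by nlinarith
    rw [hr', hk, Int.mul_ediv_cancel_left _ (by omega : g ≠ 0)]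
    exact this
  have hline' : r₁ * d' - d₁ * r' = 1 := by
    have : g * (r₁ * d' - d₁ * r') = g * 1 := by
      rw [mul_one, mul_sub, ← mul_assoc, mul_comm g r₁, mul_assoc, hgd',
        ← mul_assoc, mul_comm g d₁, mul_assoc, hgr']
      exact hline
    exact mul_left_cancel₀ (by omega) this
  have key : d₂ * r' - r₂ * d' = 1 := by
    have h1 : r₂ = g * r' - r₁ := by omega
    have h2 : d₂ = g * d' - d₁ := by omega
    rw [h1, h2]; nlinarith [hline']
  have hid : d₂ * (r₂' - r' * m) = r₂ * (d₂' - d' * m) := by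
    nlinarith [key, hm]
  have hcop : IsCoprime r₂ d₂ := ⟨-d', r', by linarith [key]⟩
  have hdvd : r₂ ∣ (r₂' - r' * m) := by
    have : r₂ ∣ d₂ * (r₂' - r' * m) := ⟨d₂' - d' * m, hid⟩
    exact hcop.dvd_of_dvd_mul_left this
  refine ⟨hdvd, ?_⟩
  have hlt : r₂' - r' * m < r₂ := by nlinarith
  rcases hdvd with ⟨k, hk⟩
  by_contra h
  push_neg at h
  have : 0 < k := by nlinarith
  nlinarith
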